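/- If in a row reduction a row v_j (with LP(v_j) = LP(v_i) and deg v_i ≤ deg v_j, i ≠ j) is replaced by v_j' = v_j − α·x^δ·v_i, where α ∈ F and δ ∈ ℕ are chosen so that the leading term of the polynomial at position LP(v_j) is cancelled, then val(v_j') < val(v_j), where val(v) = (ℓ+1)·deg v + LP(v). -/

import Mathlib

open Polynomial

noncomputable section

variable {F : Type*} [Field F]

/-- The degree of a vector of polynomials: maximum of the coordinate degrees. -/
def vecDeg {n : ℕ} (v : Fin n → Polynomial F) : WithBot ℕ :=
  Finset.univ.sup fun j => (v j).degree

/-- The degree of a vector, as a natural number. -/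
def vecDegNat {n : ℕ} (v : Fin n → Polynomial F) : ℕ :=
  Finset.univ.sup fun j => (v j).natDegree

/-- The leading position of a vector: the largest index attaining the degree. -/
def leadPos {n : ℕ} (v : Fin n → Polynomial F) : ℕ :=
  (Finset.univ.filter fun j => (v j).degree = vecDeg v).sup fun j => (j : ℕ)

/-- The value function val(v) = n * deg v + LP(v). -/
def vecVal {n : ℕ} (v : Fin n → Polynomial F) : ℕ :=
  n * vecDegNat v + leadPos v

/-- The weight-embedding map Φ. -/
def PhiW (ν : ℕ) {n : ℕ} (w : Fin n → ℕ) (v : Fin n → Polynomial F) :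
    Fin n → Polynomial F :=
  fun j => X ^ (w j) * (Polynomial.expand F ν (v j))

/-- The rows of the canonical basis matrix M. -/
def rowBasisM (ℓ : ℕ) (S G : Fin ℓ → Polynomial F) :
    Fin (ℓ+1) → Fin (ℓ+1) → Polynomial F :=
  fun i => Fin.cases (Fin.cons 1 S) (fun i' => fun j => if j = i'.succ then G i' else 0) i

variable {n : ℕ}

lemma degree_le_vecDeg (v : Fin n → Polynomial F) (k : Fin n) :
    (v k).degree ≤ vecDeg v := Finset.le_sup (f := fun j => (v j).degree) (Finset.mem_univ k)

lemma natDegree_le_vecDegNat (v : Fin n → Polynomial F) (k : Fin n) :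
    (v k).natDegree ≤ vecDegNat v := Finset.le_sup (f := fun j => (v j).natDegree) (Finset.mem_univ k)

lemma vecDeg_eq_cast [NeZero n] (v : Fin n → Polynomial F) (hv : v ≠ 0) :
    vecDeg v = (vecDegNat v : WithBot ℕ) := by
  apply le_antisymm
  · apply Finset.sup_le
    intro k _
    exact (degree_le_natDegree).trans (by exact_mod_cast natDegree_le_vecDegNat v k)
  · obtain ⟨m, -, hm⟩ := Finset.exists_mem_eq_sup Finset.univ Finset.univ_nonempty
      (fun j => (v j).natDegree)
    by_cases h0 : v m = 0
    · obtain ⟨k, hk⟩ := Function.ne_iff.mp hv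
      have hk' : v k ≠ 0 := hk
      have h1 : (0 : WithBot ℕ) ≤ (v k).degree := Polynomial.zero_le_degree_iff.mpr hk'
      have h2 : vecDegNat v = 0 := by
        have : vecDegNat v = (v m).natDegree := hm
        rw [this, h0, natDegree_zero]
      rw [h2]
      exact_mod_cast h1.trans (degree_le_vecDeg v k)
    · have h3 : ((vecDegNat v : WithBot ℕ)) = (v m).degree := by
        have : vecDegNat v = (v m).natDegree := hm
        rw [this, Polynomial.degree_eq_natDegree h0]
      rw [h3]; exact degree_le_vecDeg v m

lemma exists_leadPos [NeZero n] (v : Fin n → Polynomial F) (hv : v ≠ 0) :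
    ∃ k : Fin n, (k : ℕ) = leadPos v ∧ (v k).degree = vecDeg v := by
  have hne : (Finset.univ.filter fun j => (v j).degree = vecDeg v).Nonempty := by
    obtain ⟨m, -, hm⟩ := Finset.exists_mem_eq_sup Finset.univ Finset.univ_nonempty
      (fun j => (v j).degree)
    exact ⟨m, Finset.mem_filter.mpr ⟨Finset.mem_univ m, hm.symm⟩⟩
  obtain ⟨k, hk, hk2⟩ := Finset.exists_mem_eq_sup _ hne (fun j : Fin n => (j : ℕ))
  exact ⟨k, hk2.symm, (Finset.mem_filter.mp hk).2⟩

lemma le_leadPos (v : Fin n → Polynomial F) (k : Fin n)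
    (hk : (v k).degree = vecDeg v) : (k : ℕ) ≤ leadPos v :=
  Finset.le_sup (Finset.mem_filter.mpr ⟨Finset.mem_univ k, hk⟩)

lemma degree_lt_of_gt_leadPos (v : Fin n → Polynomial F) (hv : v ≠ 0) (k : Fin n)
    (hk : leadPos v < (k : ℕ)) : (v k).degree < vecDeg v := by
  refine lt_of_le_of_ne (degree_le_vecDeg v k) ?_
  intro hcon
  exact absurd (le_leadPos v k hcon) (not_le.mpr hk)

lemma leadPos_lt [NeZero n] (v : Fin n → Polynomial F) : leadPos v < n := by
  rw [leadPos]
  apply Finset.sup_lt_iff (by exact Nat.pos_of_ne_zero (NeZero.ne n)) |>.mpr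
  intro k _
  exact k.isLt

theorem stmt7 (ℓ : ℕ) (vi vj : Fin (ℓ+1) → Polynomial F) (hvi : vi ≠ 0) (hvj : vj ≠ 0)
    (h : Fin (ℓ+1)) (hLPi : leadPos vi = (h : ℕ)) (hLPj : leadPos vj = (h : ℕ))
    (hdeg : vecDeg vi ≤ vecDeg vj)
    (vj' : Fin (ℓ+1) → Polynomial F)
    (hvj' : vj' = vj -
      (C ((vj h).leadingCoeff / (vi h).leadingCoeff) *
        X ^ (vecDegNat vj - vecDegNat vi)) • vi)
    (hne : vj' ≠ 0) :
    vecVal vj' < vecVal vj := by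
  set di := vecDegNat vi with hdi
  set dj := vecDegNat vj with hdj
  set δ := dj - di with hδ
  set c := (vj h).leadingCoeff / (vi h).leadingCoeff with hc
  have hDi : vecDeg vi = (di : WithBot ℕ) := vecDeg_eq_cast vi hvi
  have hDj : vecDeg vj = (dj : WithBot ℕ) := vecDeg_eq_cast vj hvj
  have hdd : di ≤ dj := by
    rw [hDi, hDj] at hdeg; exact_mod_cast hdeg
  have hδdi : δ + di = dj := by omega
  -- vi h and vj h attain the degrees
  obtain ⟨k, hk1, hk2⟩ := exists_leadPos vi hvi
  have hkh : k = h := Fin.ext (by rw [hk1, hLPi])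
  rw [hkh] at hk2
  have hvih : (vi h).degree = (di : WithBot ℕ) := by rw [hk2, hDi]
  obtain ⟨k', hk1', hk2'⟩ := exists_leadPos vj hvj
  have hkh' : k' = h := Fin.ext (by rw [hk1', hLPj])
  rw [hkh'] at hk2'
  have hvjh : (vj h).degree = (dj : WithBot ℕ) := by rw [hk2', hDj]
  have hvih0 : vi h ≠ 0 := by
    intro h0; rw [h0, degree_zero] at hvih; exact (WithBot.bot_ne_coe) hvih
  have hvjh0 : vj h ≠ 0 := by
    intro h0; rw [h0, degree_zero] at hvjh; exact (WithBot.bot_ne_coe) hvjh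
  have hc0 : c ≠ 0 := div_ne_zero (leadingCoeff_ne_zero.mpr hvjh0) (leadingCoeff_ne_zero.mpr hvih0)
  set q : Polynomial F := C c * X ^ δ with hq
  have hqdeg : q.degree = (δ : WithBot ℕ) := degree_C_mul_X_pow δ hc0
  have hqlc : q.leadingCoeff = c := by
    rw [hq, leadingCoeff_mul, leadingCoeff_C, leadingCoeff_X_pow, mul_one]
  have happ : ∀ m, vj' m = vj m - q * vi m := by
    intro m; rw [hvj']; simp [hq, smul_eq_mul]
  -- degree of q * vi h
  have hqvih : (q * vi h).degree = (dj : WithBot ℕ) := by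
    rw [degree_mul, hqdeg, hvih, ← Nat.cast_add, hδdi]
  -- leading coefficient matching
  have hlc : (vj h).leadingCoeff = (q * vi h).leadingCoeff := by
    rw [leadingCoeff_mul, hqlc, hc, div_mul_cancel₀]
    exact leadingCoeff_ne_zero.mpr hvih0
  -- coordinate h of vj' drops
  have hdroph : (vj' h).degree < (dj : WithBot ℕ) := by
    rw [happ h]
    calc (vj h - q * vi h).degree < (vj h).degree :=
          degree_sub_lt (by rw [hvjh, hqvih]) hvjh0 hlc
      _ = (dj : WithBot ℕ) := hvjh
  -- coordinates above h drop
  have hdropgt : ∀ m : Fin (ℓ+1), (h : ℕ) < (m : ℕ) → (vj' m).degree < (dj : WithBot ℕ) := by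
    intro m hm
    rw [happ m]
    have h1 : (vj m).degree < (dj : WithBot ℕ) := by
      rw [← hDj]; exact degree_lt_of_gt_leadPos vj hvj m (by rw [hLPj]; exact hm)
    have h2 : (q * vi m).degree < (dj : WithBot ℕ) := by
      have hvim : (vi m).degree < (di : WithBot ℕ) := by
        rw [← hDi]; exact degree_lt_of_gt_leadPos vi hvi m (by rw [hLPi]; exact hm)
      calc (q * vi m).degree ≤ q.degree + (vi m).degree := degree_mul_le _ _
        _ = (δ : WithBot ℕ) + (vi m).degree := by rw [hqdeg]
        _ < (δ : WithBot ℕ) + (di : WithBot ℕ) :=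
            WithBot.add_lt_add_left (WithBot.coe_ne_bot) hvim
        _ = (dj : WithBot ℕ) := by rw [← Nat.cast_add, hδdi]
    exact lt_of_le_of_lt (degree_sub_le _ _) (max_lt h1 h2)
  -- all coordinates bounded
  have hub : ∀ m : Fin (ℓ+1), (vj' m).degree ≤ (dj : WithBot ℕ) := by
    intro m
    rw [happ m]
    refine le_trans (degree_sub_le _ _) (max_le ?_ ?_)
    · rw [← hDj]; exact degree_le_vecDeg vj m
    · calc (q * vi m).degree ≤ q.degree + (vi m).degree := degree_mul_le _ _
        _ ≤ (δ : WithBot ℕ) + (di : WithBot ℕ) := by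
            rw [hqdeg]
            exact add_le_add (le_refl _) (by rw [← hDi]; exact degree_le_vecDeg vi m)
        _ = (dj : WithBot ℕ) := by rw [← Nat.cast_add, hδdi]
  have hDj' : vecDeg vj' = ((vecDegNat vj' : ℕ) : WithBot ℕ) := vecDeg_eq_cast vj' hne
  have hd'le : vecDegNat vj' ≤ dj := by
    have : vecDeg vj' ≤ (dj : WithBot ℕ) := Finset.sup_le (fun m _ => hub m)
    rw [hDj'] at this; exact_mod_cast this
  have hn : 0 < ℓ + 1 := Nat.succ_pos ℓ
  rcases lt_or_eq_of_le hd'le with hlt | heq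
  · -- degree strictly drops
    have hlp : leadPos vj' < ℓ + 1 := leadPos_lt vj'
    have : vecVal vj' < (ℓ+1) * (vecDegNat vj' + 1) := by
      rw [vecVal, Nat.mul_add, Nat.mul_one]; omega
    calc vecVal vj' < (ℓ+1) * (vecDegNat vj' + 1) := this
      _ ≤ (ℓ+1) * dj := Nat.mul_le_mul_left _ (by omega)
      _ ≤ vecVal vj := Nat.le_add_right _ _
  · -- degree unchanged, leadPos drops below h
    have hallk : ∀ m : Fin (ℓ+1), (vj' m).degree = vecDeg vj' → (m : ℕ) < (h : ℕ) := by
      intro m hm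
      by_contra hcon
      push_neg at hcon
      have hmd : (vj' m).degree = (dj : WithBot ℕ) := by rw [hm, hDj', ← heq]
      rcases lt_or_eq_of_le hcon with hlt' | heq'
      · exact absurd hmd (ne_of_lt (hdropgt m hlt'))
      · have : m = h := Fin.ext heq'.symm
        rw [this] at hmd
        exact absurd hmd (ne_of_lt hdroph)
    obtain ⟨k0, -, hk02⟩ := exists_leadPos vj' hne
    have h0h : 0 < (h : ℕ) := lt_of_le_of_lt (Nat.zero_le _) (hallk k0 hk02)
    have hlp' : leadPos vj' < (h : ℕ) := by
      rw [leadPos]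
      refine Finset.sup_lt_iff (by exact_mod_cast h0h) |>.mpr ?_
      intro m hm
      exact hallk m (Finset.mem_filter.mp hm).2
    rw [vecVal, vecVal, heq, ← hdj, hLPj]
    omega
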